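/- Let n, p ≥ 2 and let A₁, …, A_p ∈ M_n(ℂ) be matrices that have the same first n−1 rows (i.e. e_kᵀ A_i = e_kᵀ A_j for all i, j and all k ≤ n−1) and share a common eigenvalue λ ∈ ℂ. Then there exists a line or a hyperplane of ℂⁿ that is invariant under every A_i. -/

import Mathlib

open Matrix

theorem stmt_4 (n p : ℕ) (hn : 2 ≤ n) (hp : 2 ≤ p)
    (A : Fin p → Matrix (Fin n) (Fin n) ℂ)
    (hrows : ∀ i j : Fin p, ∀ k : Fin n, (k : ℕ) < n - 1 → ∀ c : Fin n, A i k c = A j k c)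
    (lam : ℂ) (hlam : ∀ i, lam ∈ spectrum ℂ (A i)) :
    ∃ W : Submodule ℂ (Fin n → ℂ),
      (Module.finrank ℂ W = 1 ∨ Module.finrank ℂ W = n - 1) ∧
      ∀ i, ∀ x ∈ W, (A i).mulVec x ∈ W := by
  have hn1 : n - 1 < n := by omega
  set last : Fin n := ⟨n - 1, hn1⟩ with hlast
  set i0 : Fin p := ⟨0, by omega⟩ with hi0
  set B : Fin p → Matrix (Fin n) (Fin n) ℂ := fun i => lam • 1 - A i with hB
  have hdet : ∀ i, (B i).det = 0 := by
    intro i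
    have h := hlam i
    rw [spectrum.mem_iff] at h
    rw [Algebra.algebraMap_eq_smul_one] at h
    by_contra hd
    exact h ((Matrix.isUnit_iff_isUnit_det _).2 (isUnit_iff_ne_zero.2 hd))
  have hsm1 : ∀ v : Fin n → ℂ, Matrix.vecMul v ((lam • 1 : Matrix (Fin n) (Fin n) ℂ)) = lam • v := by
    intro v; funext c
    simp [Matrix.vecMul, dotProduct, Matrix.smul_apply, Matrix.one_apply, mul_ite,
      Finset.sum_ite_eq, mul_comm]
  have hsm2 : ∀ v : Fin n → ℂ, ((lam • 1 : Matrix (Fin n) (Fin n) ℂ)).mulVec v = lam • v := by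
    intro v
    rw [Matrix.smul_mulVec, Matrix.one_mulVec]
  have hrowB : ∀ i j : Fin p, ∀ k : Fin n, k ≠ last → B i k = B j k := by
    intro i j k hk
    have hk' : (k : ℕ) < n - 1 := by
      have h1 : (k : ℕ) ≠ n - 1 := fun h => hk (Fin.ext h)
      have := k.isLt
      omega
    funext c
    simp only [hB, Matrix.sub_apply, Matrix.smul_apply, hrows i j k hk' c]
  by_cases hcase : ∃ g : Fin n → ℂ, g ≠ 0 ∧ g last = 0 ∧ Matrix.vecMul g (B i0) = 0
  · -- hyperplane case
    obtain ⟨g, hg0, hglast, hgv⟩ := hcase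
    have hvec : ∀ i, Matrix.vecMul g (B i) = 0 := by
      intro i
      funext c
      have : Matrix.vecMul g (B i) c = Matrix.vecMul g (B i0) c := by
        simp only [Matrix.vecMul, dotProduct]
        refine Finset.sum_congr rfl fun j _ => ?_
        by_cases hj : j = last
        · subst hj; rw [hglast]; ring
        · rw [hrowB i i0 j hj]
      rw [this, hgv]
    have hAvec : ∀ i, Matrix.vecMul g (A i) = lam • g := by
      intro i
      have h := hvec i
      rw [hB] at h
      rw [Matrix.vecMul_sub, sub_eq_zero, hsm1 g] at h
      exact h.symm
    let f : (Fin n → ℂ) →ₗ[ℂ] ℂ :=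
      { toFun := fun x => g ⬝ᵥ x
        map_add' := fun x y => dotProduct_add g x y
        map_smul' := fun c x => by
          simpa using Matrix.dotProduct_smul c g x }
    refine ⟨LinearMap.ker f, Or.inr ?_, ?_⟩
    · obtain ⟨j, hj⟩ : ∃ j, g j ≠ 0 := Function.ne_iff.1 hg0
      have hsurj : Function.Surjective f := by
        intro y
        refine ⟨(y / g j) • (Pi.single j (1 : ℂ) : Fin n → ℂ), ?_⟩
        show g ⬝ᵥ ((y / g j) • (Pi.single j (1 : ℂ) : Fin n → ℂ)) = y
        rw [dotProduct_smul, dotProduct_single]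
        rw [smul_eq_mul]
        field_simp
      have hrk := LinearMap.finrank_range_add_finrank_ker f
      rw [LinearMap.range_eq_top.2 hsurj] at hrk
      simp only [finrank_top, Module.finrank_self] at hrk
      have hdom : Module.finrank ℂ (Fin n → ℂ) = n := by simp
      omega
    · intro i x hx
      rw [LinearMap.mem_ker] at hx ⊢
      show g ⬝ᵥ (A i).mulVec x = 0
      rw [Matrix.dotProduct_mulVec, hAvec i, smul_dotProduct]
      show lam * (g ⬝ᵥ x) = 0
      rw [show g ⬝ᵥ x = 0 from hx, mul_zero]
  · -- line case
    push_neg at hcase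
    set M : Matrix (Fin n) (Fin n) ℂ := Matrix.updateRow (B i0) last 0 with hM
    have hMdet : M.det = 0 := by
      apply Matrix.det_eq_zero_of_row_eq_zero last
      intro j
      simp [hM]
    obtain ⟨x, hx0, hMx⟩ := (Matrix.exists_mulVec_eq_zero_iff).2 hMdet
    have hxrows : ∀ k : Fin n, k ≠ last → (B i0) k ⬝ᵥ x = 0 := by
      intro k hk
      have : M.mulVec x k = 0 := by rw [hMx]; rfl
      rwa [Matrix.mulVec, hM, Matrix.updateRow_ne hk] at this
    have hBi : ∀ i, (B i).mulVec x = 0 := by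
      intro i
      obtain ⟨g, hg0, hgv⟩ := (Matrix.exists_vecMul_eq_zero_iff).2 (hdet i)
      have hgl : g last ≠ 0 := by
        intro h
        apply hcase g hg0 h
        funext c
        have : Matrix.vecMul g (B i0) c = Matrix.vecMul g (B i) c := by
          simp only [Matrix.vecMul, dotProduct]
          refine Finset.sum_congr rfl fun j _ => ?_
          by_cases hj : j = last
          · subst hj; rw [h]; ring
          · rw [hrowB i0 i j hj]
        rw [this, hgv]
      have hcol : ∀ k : Fin n, k ≠ last → (B i).mulVec x k = 0 := by
        intro k hk
        show (B i) k ⬝ᵥ x = 0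
        rw [hrowB i i0 k hk]
        exact hxrows k hk
      have hdp : g ⬝ᵥ (B i).mulVec x = 0 := by
        rw [Matrix.dotProduct_mulVec, hgv, zero_dotProduct]
      have hsum : g ⬝ᵥ (B i).mulVec x = g last * (B i).mulVec x last := by
        rw [dotProduct]
        refine Finset.sum_eq_single last (fun k _ hk => ?_) (fun h => absurd (Finset.mem_univ last) h)
        rw [hcol k hk, mul_zero]
      have hlastcol : (B i).mulVec x last = 0 := by
        rw [hsum] at hdp
        exact (mul_eq_zero.1 hdp).resolve_left hgl
      funext k
      by_cases hk : k = last
      · subst hk; exact hlastcol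
      · exact hcol k hk
    have hAx : ∀ i, (A i).mulVec x = lam • x := by
      intro i
      have h := hBi i
      rw [hB] at h
      rw [Matrix.sub_mulVec, sub_eq_zero, hsm2 x] at h
      exact h.symm
    refine ⟨Submodule.span ℂ {x}, Or.inl (finrank_span_singleton hx0), ?_⟩
    intro i y hy
    obtain ⟨c, hc⟩ := Submodule.mem_span_singleton.1 hy
    rw [← hc]
    rw [Matrix.mulVec_smul, hAx i]
    exact Submodule.smul_mem _ c (Submodule.smul_mem _ lam (Submodule.mem_span_singleton_self x))
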